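/- Let E be a real inner product space, f : E → ℝ convex and differentiable with L-Lipschitz gradient (L > 0), and let x̄ be any minimizer of f, with f* = f(x̄). For any x ∈ E and any ᾱ ∈ (0, 1/L], setting x⁺ = x − ᾱ ∇f(x), we have f(x⁺) − f* ≤ (1/(2ᾱ)) (‖x − x̄‖² − ‖x⁺ − x̄‖²). -/

import Mathlib

open scoped RealInnerProductSpace

lemma line_hasDerivAt {E : Type*} [NormedAddCommGroup E] [InnerProductSpace ℝ E]
    (f : E → ℝ) (f' : E → E)
    (hderiv : ∀ y, HasFDerivAt f (innerSL ℝ (f' y)) y) (x v : E) (t : ℝ) :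
    HasDerivAt (fun s : ℝ => f (x + s • v)) ⟪f' (x + t • v), v⟫ t := by
  have hc : HasDerivAt (fun s : ℝ => x + s • v) v t := by
    simpa using ((hasDerivAt_id t).smul_const v).const_add x
  have h := (hderiv (x + t • v)).comp_hasDerivAt t hc
  simp at h
  exact h

-- supporting hyperplane
lemma support_ineq {E : Type*} [NormedAddCommGroup E] [InnerProductSpace ℝ E]
    (f : E → ℝ) (f' : E → E)
    (hconv : ConvexOn ℝ Set.univ f)
    (hderiv : ∀ y, HasFDerivAt f (innerSL ℝ (f' y)) y) (x y : E) :
    f x + ⟪f' x, y - x⟫ ≤ f y := by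
  set v := y - x
  have hφ : ConvexOn ℝ Set.univ (fun s : ℝ => f (x + s • v)) := by
    have : (fun s : ℝ => f (x + s • v)) = f ∘ (AffineMap.lineMap x y) := by
      funext s; simp [AffineMap.lineMap_apply, v]; rw [add_comm]
    rw [this]
    exact (hconv.comp_affineMap _).subset (fun a _ => Set.mem_univ a) convex_univ
  have h := hφ.le_slope_of_hasDerivAt (Set.mem_univ (0:ℝ)) (Set.mem_univ (1:ℝ))
    one_pos (by simpa using line_hasDerivAt f f' hderiv x v 0)
  simp [slope_def_field, v] at h
  simp only [v] at h ⊢; linarith [h]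

lemma descent_ineq {E : Type*} [NormedAddCommGroup E] [InnerProductSpace ℝ E]
    (f : E → ℝ) (f' : E → E) (L : ℝ) (hL : 0 < L)
    (hderiv : ∀ y, HasFDerivAt f (innerSL ℝ (f' y)) y)
    (hlip : ∀ y z, ‖f' y - f' z‖ ≤ L * ‖y - z‖) (x y : E) :
    f y ≤ f x + ⟪f' x, y - x⟫ + L / 2 * ‖y - x‖ ^ 2 := by
  set v := y - x with hv
  have hf'cont : Continuous f' := by
    have : LipschitzWith (Real.toNNReal L) f' := by
      apply LipschitzWith.of_dist_le_mul
      intro a b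
      rw [dist_eq_norm, dist_eq_norm, Real.coe_toNNReal _ hL.le]
      exact hlip a b
    exact this.continuous
  have hcontphi : Continuous (fun t : ℝ => ⟪f' (x + t • v), v⟫) := by
    apply Continuous.inner
    · exact hf'cont.comp (by continuity)
    · exact continuous_const
  have hint : IntervalIntegrable (fun t : ℝ => ⟪f' (x + t • v), v⟫) MeasureTheory.volume 0 1 :=
    hcontphi.intervalIntegrable 0 1
  have heq : f (x + (1:ℝ) • v) - f (x + (0:ℝ) • v) =
      ∫ t in (0:ℝ)..1, ⟪f' (x + t • v), v⟫ := by
    refine (intervalIntegral.integral_eq_sub_of_hasDerivAt (f := fun t => f (x + t • v)) (fun t _ => ?_) hint).symm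
    exact line_hasDerivAt f f' hderiv x v t
  have hbound : (∫ t in (0:ℝ)..1, ⟪f' (x + t • v), v⟫) ≤
      ∫ t in (0:ℝ)..1, (⟪f' x, v⟫ + L * t * ‖v‖ ^ 2) := by
    apply intervalIntegral.integral_mono_on (by norm_num) hint
    · apply IntervalIntegrable.add intervalIntegrable_const
      exact (Continuous.intervalIntegrable (by continuity) 0 1)
    · intro t ht
      have h1 : ⟪f' (x + t • v), v⟫ - ⟪f' x, v⟫ = ⟪f' (x + t • v) - f' x, v⟫ := by
        rw [inner_sub_left]
      have h2 : ⟪f' (x + t • v) - f' x, v⟫ ≤ ‖f' (x + t • v) - f' x‖ * ‖v‖ :=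
        real_inner_le_norm _ _
      have h3 : ‖f' (x + t • v) - f' x‖ ≤ L * ‖t • v‖ := by
        simpa using hlip (x + t • v) x
      have h4 : ‖t • v‖ = t * ‖v‖ := by
        rw [norm_smul, Real.norm_eq_abs, abs_of_nonneg ht.1]
      rw [h4] at h3
      have h5 := mul_le_mul_of_nonneg_right h3 (norm_nonneg v)
      nlinarith [h5]
  have hval : (∫ t in (0:ℝ)..1, (⟪f' x, v⟫ + L * t * ‖v‖ ^ 2)) =
      ⟪f' x, v⟫ + L / 2 * ‖v‖ ^ 2 := by
    rw [intervalIntegral.integral_add intervalIntegrable_const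
      (Continuous.intervalIntegrable (by continuity) 0 1)]
    have h6 : (∫ t in (0:ℝ)..1, L * t * ‖v‖ ^ 2) = L / 2 * ‖v‖ ^ 2 := by
      have h7 : (fun t : ℝ => L * t * ‖v‖ ^ 2) = fun t : ℝ => (L * ‖v‖ ^ 2) * t := by
        funext t; ring
      rw [h7, intervalIntegral.integral_const_mul, integral_id]; ring
    rw [h6]; simp
  have hx0 : x + (0:ℝ) • v = x := by simp
  have hx1 : x + (1:ℝ) • v = y := by simp [hv]
  rw [hx0, hx1] at heq
  rw [hval] at hbound
  linarith



/-- One step of gradient descent with step `ᾱ ∈ (0, 1/L]` satisfies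
`f(x⁺) − f* ≤ (1/(2ᾱ)) (‖x − x̄‖² − ‖x⁺ − x̄‖²)` for any minimizer `x̄`. -/
theorem gradient_descent_one_step_bound
    {E : Type*} [NormedAddCommGroup E] [InnerProductSpace ℝ E]
    (f : E → ℝ) (f' : E → E) (L : ℝ) (hL : 0 < L)
    (hconv : ConvexOn ℝ Set.univ f)
    (hderiv : ∀ y, HasFDerivAt f (innerSL ℝ (f' y)) y)
    (hlip : ∀ y z, ‖f' y - f' z‖ ≤ L * ‖y - z‖)
    (xbar : E) (hxbar : ∀ y, f xbar ≤ f y)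
    (α : ℝ) (hα0 : 0 < α) (hαL : α ≤ 1 / L)
    (x : E) :
    f (x - α • f' x) - f xbar ≤
      (1 / (2 * α)) * (‖x - xbar‖ ^ 2 - ‖x - α • f' x - xbar‖ ^ 2) := by
  set g := f' x with hg
  have hLα : L * α ≤ 1 := by
    rw [le_div_iff₀ hL] at hαL; linarith
  have hd := descent_ineq f f' L hL hderiv hlip x (x - α • g)
  have hs := support_ineq f f' hconv hderiv x xbar
  have hsub : x - α • g - x = -(α • g) := by abel
  rw [hsub, inner_neg_right, real_inner_smul_right, real_inner_self_eq_norm_sq,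
    norm_neg, norm_smul, Real.norm_eq_abs, abs_of_pos hα0] at hd
  have e1 : f (x - α • g) ≤ f x - α * ‖g‖ ^ 2 + L / 2 * (α ^ 2 * ‖g‖ ^ 2) := by
    nlinarith [hd]
  have e2 : f x ≤ f xbar + ⟪g, x - xbar⟫ := by
    have := support_ineq f f' hconv hderiv x xbar
    have h' : ⟪g, xbar - x⟫ = -⟪g, x - xbar⟫ := by
      rw [← inner_neg_right]; congr 1; abel
    rw [h'] at this
    linarith
  have e3 : ‖x - α • g - xbar‖ ^ 2 =
      ‖x - xbar‖ ^ 2 - 2 * (α * ⟪g, x - xbar⟫) + α ^ 2 * ‖g‖ ^ 2 := by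
    have hsub2 : x - α • g - xbar = (x - xbar) - α • g := by abel
    rw [hsub2, norm_sub_sq_real, real_inner_smul_right, real_inner_comm, norm_smul,
      Real.norm_eq_abs, abs_of_pos hα0]
    ring
  rw [e3]
  have hrhs : (1 / (2 * α)) *
      (‖x - xbar‖ ^ 2 - (‖x - xbar‖ ^ 2 - 2 * (α * ⟪g, x - xbar⟫) + α ^ 2 * ‖g‖ ^ 2)) =
      ⟪g, x - xbar⟫ - α / 2 * ‖g‖ ^ 2 := by
    field_simp
    ring
  rw [hrhs]
  nlinarith [mul_nonneg (mul_nonneg (sub_nonneg.mpr hLα) hα0.le) (sq_nonneg ‖g‖)]
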